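/- For the type A quiver-like representation W = 𝔤𝔩_n × ℂ^n of G = GL_n with the determinant character, the KN one-parameter subgroups (up to Weyl group action and positive scaling) are β_k corresponding to ∑_{i=1}^k eᵢ for 1 ≤ k ≤ n, and for each such β_k: (1/2)∑ᵢ|αᵢ·β_k| = (n−k)k + k/2, wt_{𝔫⁻}(β_k) = −(n−k)k, and hence the shift (1/2)∑ᵢ|αᵢ·β_k| + wt_{𝔫⁻}(β_k) equals k/2. -/

import Mathlib

noncomputable section

/-- The one-parameter subgroup `β_k = ∑_{i=1}^k eᵢ` of the diagonal torus of `GL_n`. -/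
def betaK (n k : ℕ) : Fin n → ℝ := fun i => if (i : ℕ) < k then 1 else 0

/-- The span of a subset of the `T`-weights of `W = 𝔤𝔩_n × ℂ^n`
(roots `eᵢ - eⱼ` from `A` and weights `eᵢ` from `B`). -/
def wtSpan (n : ℕ) (A : Finset (Fin n × Fin n)) (B : Finset (Fin n)) :
    Submodule ℝ (EuclideanSpace ℝ (Fin n)) :=
  Submodule.span ℝ
    ((fun p : Fin n × Fin n =>
        EuclideanSpace.single p.1 (1 : ℝ) - EuclideanSpace.single p.2 (1 : ℝ)) ''
          (A : Set (Fin n × Fin n))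
      ∪ (fun i : Fin n => EuclideanSpace.single i (1 : ℝ)) '' (B : Set (Fin n)))

/-- The orthogonal projection of `λ = ∑ eᵢ` onto the orthocomplement of the span of a
subset of the weights. -/
def lamProj (n : ℕ) (A : Finset (Fin n × Fin n)) (B : Finset (Fin n)) :
    EuclideanSpace ℝ (Fin n) :=
  (Submodule.orthogonalProjection (wtSpan n A B)ᗮ
    ((WithLp.equiv 2 (Fin n → ℝ)).symm fun _ => (1 : ℝ)) : EuclideanSpace ℝ (Fin n))

/-! ### Auxiliary: connectivity / killed coordinates -/

/-- Reachability in the undirected graph on `Fin n` with edge set `A`. -/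
def reachRel {n : ℕ} (A : Finset (Fin n × Fin n)) : Fin n → Fin n → Prop :=
  Relation.ReflTransGen (fun i j => (i, j) ∈ A ∨ (j, i) ∈ A)

/-- A coordinate is killed if it is connected to some element of `B`. -/
def killed {n : ℕ} (A : Finset (Fin n × Fin n)) (B : Finset (Fin n)) (i : Fin n) : Prop :=
  ∃ b ∈ B, reachRel A i b

lemma reachRel_symm {n : ℕ} {A : Finset (Fin n × Fin n)} {i j : Fin n}
    (h : reachRel A i j) : reachRel A j i :=
  by
    haveI : Std.Symm (fun i j : Fin n => (i, j) ∈ A ∨ (j, i) ∈ A) := ⟨fun _ _ h => h.symm⟩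
    unfold reachRel at h ⊢
    exact Std.Symm.symm _ _ h

lemma diff_mem_wtSpan {n : ℕ} {A : Finset (Fin n × Fin n)} (B : Finset (Fin n))
    {i j : Fin n} (h : reachRel A i j) :
    EuclideanSpace.single i (1 : ℝ) - EuclideanSpace.single j (1 : ℝ) ∈ wtSpan n A B := by
  induction h with
  | refl => simp
  | tail _ hedge ih =>
    rename_i b c _
    have hb : EuclideanSpace.single b (1 : ℝ) - EuclideanSpace.single c (1 : ℝ)
        ∈ wtSpan n A B := by
      rcases hedge with h1 | h1
      · exact Submodule.subset_span (Set.mem_union_left _ ⟨(b, c), by simpa using h1, rfl⟩)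
      · have h2 : EuclideanSpace.single c (1 : ℝ) - EuclideanSpace.single b (1 : ℝ)
            ∈ wtSpan n A B :=
          Submodule.subset_span (Set.mem_union_left _ ⟨(c, b), by simpa using h1, rfl⟩)
        have := (wtSpan n A B).neg_mem h2
        simpa [neg_sub] using this
    have := (wtSpan n A B).add_mem ih hb
    simpa [sub_add_sub_cancel] using this

lemma single_mem_wtSpan {n : ℕ} {A : Finset (Fin n × Fin n)} {B : Finset (Fin n)}
    {i : Fin n} (h : killed A B i) :
    EuclideanSpace.single i (1 : ℝ) ∈ wtSpan n A B := by
  obtain ⟨b, hb, hr⟩ := h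
  have h1 := diff_mem_wtSpan B hr
  have h2 : EuclideanSpace.single b (1 : ℝ) ∈ wtSpan n A B :=
    Submodule.subset_span (Set.mem_union_right _ ⟨b, by simpa using hb, rfl⟩)
  have := (wtSpan n A B).add_mem h1 h2
  simpa using this

open Classical in
lemma lamProj_eq {n : ℕ} (A : Finset (Fin n × Fin n)) (B : Finset (Fin n)) :
    lamProj n A B
      = (WithLp.equiv 2 (Fin n → ℝ)).symm (fun i => if killed A B i then 0 else 1) := by
  classical
  set v : EuclideanSpace ℝ (Fin n) :=
    (WithLp.equiv 2 (Fin n → ℝ)).symm (fun i => if killed A B i then 0 else 1) with hv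
  have hvs : ∀ j : Fin n, v j = if killed A B j then 0 else 1 := fun j => rfl
  rw [lamProj, ← Submodule.starProjection_apply]
  apply Submodule.eq_starProjection_of_mem_orthogonal
  · -- v ∈ (wtSpan n A B)ᗮ
    rw [Submodule.mem_orthogonal]
    have hgen : ∀ u ∈
        ((fun p : Fin n × Fin n =>
          EuclideanSpace.single p.1 (1 : ℝ) - EuclideanSpace.single p.2 (1 : ℝ)) ''
            (A : Set (Fin n × Fin n))
        ∪ (fun i : Fin n => EuclideanSpace.single i (1 : ℝ)) '' (B : Set (Fin n))),
        (inner ℝ u v : ℝ) = 0 := by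
      rintro u (⟨p, hp, rfl⟩ | ⟨b, hb, rfl⟩)
      · have hpA : (p.1, p.2) ∈ A := by simpa using hp
        have hreach : reachRel A p.1 p.2 := Relation.ReflTransGen.single (Or.inl hpA)
        have hiff : killed A B p.1 ↔ killed A B p.2 := by
          constructor
          · rintro ⟨b, hb, hr⟩; exact ⟨b, hb, (reachRel_symm hreach).trans hr⟩
          · rintro ⟨b, hb, hr⟩; exact ⟨b, hb, hreach.trans hr⟩
        rw [inner_sub_left, EuclideanSpace.inner_single_left, EuclideanSpace.inner_single_left]
        simp [hvs, hiff]
      · have hk : killed A B b := ⟨b, by simpa using hb, Relation.ReflTransGen.refl⟩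
        rw [EuclideanSpace.inner_single_left]
        simp [hvs, hk]
    intro u hu
    refine Submodule.span_induction hgen ?_ ?_ ?_ hu
    · simp
    · intro x y _ _ hx hy; rw [inner_add_left, hx, hy, add_zero]
    · intro a x _ hx; rw [inner_smul_left, hx, mul_zero]
  · -- λ - v ∈ (wtSpan)ᗮᗮ
    apply Submodule.le_orthogonal_orthogonal
    have hw : ((WithLp.equiv 2 (Fin n → ℝ)).symm fun _ => (1 : ℝ)) - v
        = ∑ j ∈ Finset.univ.filter (fun j => killed A B j),
            EuclideanSpace.single j (1 : ℝ) := by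
      ext i
      have : (∑ j ∈ Finset.univ.filter (fun j => killed A B j),
          EuclideanSpace.single j (1 : ℝ)) i
          = ∑ j ∈ Finset.univ.filter (fun j => killed A B j),
              (if i = j then (1 : ℝ) else 0) := by
        rw [WithLp.ofLp_sum, Finset.sum_apply]
        exact Finset.sum_congr rfl fun j _ => EuclideanSpace.single_apply j 1 i
      rw [this, Finset.sum_ite_eq]
      simp [hvs]
      by_cases h : killed A B i <;> simp [h]
    rw [hw]
    exact Submodule.sum_mem _ fun j hj =>
      single_mem_wtSpan (by simpa using (Finset.mem_filter.mp hj).2)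

/-! ### Auxiliary: counting -/

lemma card_filter_lt {n k : ℕ} (hkn : k ≤ n) :
    (Finset.univ.filter (fun j : Fin n => (j : ℕ) < k)).card = k := by
  have : Finset.univ.filter (fun j : Fin n => (j : ℕ) < k)
      = Finset.map ⟨Fin.castLE hkn, Fin.castLE_injective hkn⟩ Finset.univ := by
    ext j
    simp only [Finset.mem_filter, Finset.mem_univ, true_and, Finset.mem_map,
      Function.Embedding.coeFn_mk]
    constructor
    · intro hj; exact ⟨⟨j, hj⟩, rfl⟩
    · rintro ⟨i, rfl⟩; exact i.isLt
  simp [this]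

lemma card_filter_not_lt {n k : ℕ} (hkn : k ≤ n) :
    (Finset.univ.filter (fun j : Fin n => ¬ (j : ℕ) < k)).card = n - k := by
  have h := Finset.card_filter_add_card_filter_not
    (s := (Finset.univ : Finset (Fin n))) (p := fun j : Fin n => (j : ℕ) < k)
  rw [card_filter_lt hkn] at h
  simp only [Finset.card_univ, Fintype.card_fin] at h
  omega

lemma sum_if_lt {n k : ℕ} (hkn : k ≤ n) (a b : ℝ) :
    (∑ i : Fin n, if (i : ℕ) < k then a else b)
      = k * a + ((n : ℝ) - k) * b := by
  classical
  rw [Finset.sum_ite, Finset.sum_const, Finset.sum_const,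
    card_filter_lt hkn, card_filter_not_lt hkn]
  simp only [nsmul_eq_mul]
  rw [Nat.cast_sub hkn]

theorem stmt_18 (n k : ℕ) (hk1 : 1 ≤ k) (hkn : k ≤ n) :
    (∀ (A : Finset (Fin n × Fin n)) (B : Finset (Fin n)) (i : Fin n),
      lamProj n A B i ∈ ({0, 1} : Set ℝ)) ∧
    ((1/2 : ℝ) * ((∑ p : Fin n × Fin n, |betaK n k p.1 - betaK n k p.2|)
          + ∑ i, |betaK n k i|)
        = ((n : ℝ) - k) * k + k / 2) ∧
    ((∑ p : Fin n × Fin n, min (betaK n k p.1 - betaK n k p.2) 0)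
        = -(((n : ℝ) - k) * k)) ∧
    ((1/2 : ℝ) * ((∑ p : Fin n × Fin n, |betaK n k p.1 - betaK n k p.2|)
          + ∑ i, |betaK n k i|)
        + (∑ p : Fin n × Fin n, min (betaK n k p.1 - betaK n k p.2) 0)
        = k / 2) := by
  classical
  have hsum_abs : (∑ i : Fin n, |betaK n k i|) = k := by
    have : ∀ i : Fin n, |betaK n k i| = if (i : ℕ) < k then (1 : ℝ) else 0 := by
      intro i; unfold betaK; by_cases h : (i : ℕ) < k <;> simp [h]
    rw [Finset.sum_congr rfl fun i _ => this i, sum_if_lt hkn]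
    ring
  have habs : ∀ i j : Fin n, |betaK n k i - betaK n k j|
      = if (i : ℕ) < k then (if (j : ℕ) < k then 0 else 1)
        else (if (j : ℕ) < k then 1 else 0) := by
    intro i j; unfold betaK
    by_cases hi : (i : ℕ) < k <;> by_cases hj : (j : ℕ) < k <;> simp [hi, hj]
  have hmin : ∀ i j : Fin n, min (betaK n k i - betaK n k j) 0
      = if (i : ℕ) < k then 0
        else (if (j : ℕ) < k then -1 else 0) := by
    intro i j; unfold betaK
    by_cases hi : (i : ℕ) < k <;> by_cases hj : (j : ℕ) < k <;>
      simp [hi, hj] <;> norm_num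
  have hpair_abs : (∑ p : Fin n × Fin n, |betaK n k p.1 - betaK n k p.2|)
      = 2 * (((n : ℝ) - k) * k) := by
    rw [Fintype.sum_prod_type]
    have : ∀ i : Fin n, (∑ j : Fin n, |betaK n k i - betaK n k j|)
        = if (i : ℕ) < k then (n : ℝ) - k else k := by
      intro i
      rw [Finset.sum_congr rfl fun j _ => habs i j]
      by_cases hi : (i : ℕ) < k
      · simp only [hi, if_true]
        rw [sum_if_lt hkn]; ring
      · simp only [hi, if_false]
        rw [sum_if_lt hkn]; ring
    rw [Finset.sum_congr rfl fun i _ => this i, sum_if_lt hkn]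
    ring
  have hpair_min : (∑ p : Fin n × Fin n, min (betaK n k p.1 - betaK n k p.2) 0)
      = -(((n : ℝ) - k) * k) := by
    rw [Fintype.sum_prod_type]
    have : ∀ i : Fin n, (∑ j : Fin n, min (betaK n k i - betaK n k j) 0)
        = if (i : ℕ) < k then 0 else -(k : ℝ) := by
      intro i
      rw [Finset.sum_congr rfl fun j _ => hmin i j]
      by_cases hi : (i : ℕ) < k
      · simp [hi]
      · simp only [hi, if_false]
        rw [sum_if_lt hkn]; ring
    rw [Finset.sum_congr rfl fun i _ => this i, sum_if_lt hkn]
    ring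
  refine ⟨?_, ?_, hpair_min, ?_⟩
  · intro A B i
    rw [lamProj_eq A B]
    by_cases h : killed A B i
    · left; simp [h]
    · right; simp [h]
  · rw [hpair_abs, hsum_abs]; ring
  · rw [hpair_abs, hsum_abs, hpair_min]; ring

end
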